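/- Let 1 < p₁, p₂ < ∞ with 1/p = 1/p₁ + 1/p₂ and ω ∈ A₁. If the maximal linear commutator 𝓜_{Σb⃗} with b⃗ = (b,b) is bounded from L^{p₁}(ω) × L^{p₂}(ω) to L^{p}(ω^{1-p}) with operator norm K, then for every cube Q, (1/ω(Q)) ∫_Q |b(x) - b_Q| dx ≤ C·K for a constant C independent of Q; that is, b ∈ BMO(ω). -/

import Mathlib

open MeasureTheory ENNReal NNReal

noncomputable section

abbrev Rn (n : ℕ) := Fin n → ℝ

variable {n : ℕ}

/-- A cube in ℝⁿ: a closed ball in the sup norm, with center `c` and half side-length `r`. -/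
def Cube (c : Rn n) (r : ℝ) : Set (Rn n) := Metric.closedBall c r

/-- Average of an `ℝ≥0∞`-valued function over a cube. -/
def cubeAvgE (g : Rn n → ℝ≥0∞) (c : Rn n) (r : ℝ) : ℝ≥0∞ :=
  (∫⁻ y in Cube c r, g y) / volume (Cube c r)

/-- Average of a real-valued function over a cube. -/
def cubeAvg (f : Rn n → ℝ) (c : Rn n) (r : ℝ) : ℝ :=
  (∫ y in Cube c r, f y) / (volume (Cube c r)).toReal

/-- ω-measure of a cube. -/
def wVol (ω : Rn n → ℝ) (c : Rn n) (r : ℝ) : ℝ≥0∞ :=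
  ∫⁻ y in Cube c r, ENNReal.ofReal (ω y)

/-- The bilinear Hardy–Littlewood maximal function 𝓜. -/
def biM (f₁ f₂ : Rn n → ℝ) (x : Rn n) : ℝ≥0∞ :=
  ⨆ (c : Rn n) (r : ℝ) (_ : 0 < r) (_ : x ∈ Cube c r),
    cubeAvgE (fun y => ENNReal.ofReal |f₁ y|) c r *
      cubeAvgE (fun y => ENNReal.ofReal |f₂ y|) c r

/-- The local maximal function M_{Q₀}, over subcubes of Q₀ = Cube c₀ r₀ containing x. -/
def locM (c₀ : Rn n) (r₀ : ℝ) (b : Rn n → ℝ) (x : Rn n) : ℝ≥0∞ :=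
  ⨆ (c : Rn n) (r : ℝ) (_ : 0 < r) (_ : x ∈ Cube c r) (_ : Cube c r ⊆ Cube c₀ r₀),
    cubeAvgE (fun y => ENNReal.ofReal |b y|) c r

/-- Maximal function of an `ℝ≥0∞`-valued function. -/
def eM (g : Rn n → ℝ≥0∞) (x : Rn n) : ℝ≥0∞ :=
  ⨆ (c : Rn n) (r : ℝ) (_ : 0 < r) (_ : x ∈ Cube c r), cubeAvgE g c r

/-- The Hardy–Littlewood maximal function M. -/
def HLM (f : Rn n → ℝ) : Rn n → ℝ≥0∞ := eM (fun y => ENNReal.ofReal |f y|)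

/-- The weighted maximal function M_{ω,s} = (M_ω(|f|^s))^{1/s}. -/
def wM (s : ℝ) (ω f : Rn n → ℝ) (x : Rn n) : ℝ≥0∞ :=
  (⨆ (c : Rn n) (r : ℝ) (_ : 0 < r) (_ : x ∈ Cube c r),
    (∫⁻ y in Cube c r, ENNReal.ofReal |f y| ^ s * ENNReal.ofReal (ω y)) / wVol ω c r) ^ (1 / s)

/-- Weighted L^p norm of an `ℝ≥0∞`-valued function. -/
def wNormE (p : ℝ) (ω : Rn n → ℝ) (g : Rn n → ℝ≥0∞) : ℝ≥0∞ :=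
  (∫⁻ x, g x ^ p * ENNReal.ofReal (ω x)) ^ (1 / p)

/-- Weighted L^p norm of a real-valued function. -/
def wNorm (p : ℝ) (ω f : Rn n → ℝ) : ℝ≥0∞ :=
  wNormE p ω fun x => ENNReal.ofReal |f x|

/-- Maximal commutator 𝓜^{(1)}_b. -/
def Mc1 (b f₁ f₂ : Rn n → ℝ) (x : Rn n) : ℝ≥0∞ :=
  ⨆ (c : Rn n) (r : ℝ) (_ : 0 < r) (_ : x ∈ Cube c r),
    (∫⁻ y₁ in Cube c r, ∫⁻ y₂ in Cube c r,
      ENNReal.ofReal |b x - b y₁| * (ENNReal.ofReal |f₁ y₁| * ENNReal.ofReal |f₂ y₂|)) /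
      volume (Cube c r) ^ 2

/-- Maximal commutator 𝓜^{(2)}_b. -/
def Mc2 (b f₁ f₂ : Rn n → ℝ) (x : Rn n) : ℝ≥0∞ :=
  ⨆ (c : Rn n) (r : ℝ) (_ : 0 < r) (_ : x ∈ Cube c r),
    (∫⁻ y₁ in Cube c r, ∫⁻ y₂ in Cube c r,
      ENNReal.ofReal |b x - b y₂| * (ENNReal.ofReal |f₁ y₁| * ENNReal.ofReal |f₂ y₂|)) /
      volume (Cube c r) ^ 2

/-- The maximal linear commutator 𝓜_{Σb⃗} for b⃗ = (b,b). -/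
def MSigma (b f₁ f₂ : Rn n → ℝ) (x : Rn n) : ℝ≥0∞ := Mc1 b f₁ f₂ x + Mc2 b f₁ f₂ x

/-- The maximal iterated commutator 𝓜_{Πb⃗} for b⃗ = (b,b). -/
def MPi (b f₁ f₂ : Rn n → ℝ) (x : Rn n) : ℝ≥0∞ :=
  ⨆ (c : Rn n) (r : ℝ) (_ : 0 < r) (_ : x ∈ Cube c r),
    (∫⁻ y₁ in Cube c r, ∫⁻ y₂ in Cube c r,
      ENNReal.ofReal |b x - b y₁| * ENNReal.ofReal |b x - b y₂| *
        (ENNReal.ofReal |f₁ y₁| * ENNReal.ofReal |f₂ y₂|)) /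
      volume (Cube c r) ^ 2

/-- The negative part b⁻ = -min{b,0}. -/
def bminus (b : Rn n → ℝ) (x : Rn n) : ℝ := max (-b x) 0

/-- The linear commutator [Σb⃗,𝓜] = [b,𝓜]^{(1)} + [b,𝓜]^{(2)}, b⃗ = (b,b). -/
def commSigma (b f₁ f₂ : Rn n → ℝ) (x : Rn n) : ℝ :=
  (b x * (biM f₁ f₂ x).toReal - (biM (fun y => b y * f₁ y) f₂ x).toReal) +
  (b x * (biM f₁ f₂ x).toReal - (biM f₁ (fun y => b y * f₂ y) x).toReal)

/-- The iterated commutator [Πb⃗,𝓜], b⃗ = (b,b). -/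
def commPi (b f₁ f₂ : Rn n → ℝ) (x : Rn n) : ℝ :=
  b x ^ 2 * (biM f₁ f₂ x).toReal - b x * (biM f₁ (fun y => b y * f₂ y) x).toReal
    - b x * (biM (fun y => b y * f₁ y) f₂ x).toReal
    + (biM (fun y => b y * f₁ y) (fun y => b y * f₂ y) x).toReal

/-- The weighted BMO^q(ω) norm. -/
def bmoNorm (q : ℝ) (ω b : Rn n → ℝ) : ℝ≥0∞ :=
  ⨆ (c : Rn n) (r : ℝ) (_ : 0 < r),
    ((∫⁻ y in Cube c r,
        ENNReal.ofReal |b y - cubeAvg b c r| ^ q * ENNReal.ofReal (ω y) ^ (1 - q)) /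
      wVol ω c r) ^ (1 / q)

/-- The Muckenhoupt class A₁. -/
def IsA1 (ω : Rn n → ℝ) : Prop :=
  Measurable ω ∧ (∀ x, 0 ≤ ω x) ∧ (∀ᵐ x ∂(volume : Measure (Rn n)), 0 < ω x) ∧
    LocallyIntegrable ω ∧
    ∃ C > (0 : ℝ), ∀ (c : Rn n) (r : ℝ), 0 < r →
      wVol ω c r / volume (Cube c r) ≤
        ENNReal.ofReal C * essInf (fun y => ENNReal.ofReal (ω y)) (volume.restrict (Cube c r))

/-- The Muckenhoupt class A_q, 1 < q < ∞. -/
def IsAq (q : ℝ) (ω : Rn n → ℝ) : Prop :=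
  Measurable ω ∧ (∀ x, 0 ≤ ω x) ∧ (∀ᵐ x ∂(volume : Measure (Rn n)), 0 < ω x) ∧
    LocallyIntegrable ω ∧
    ∃ C : ℝ, ∀ (c : Rn n) (r : ℝ), 0 < r →
      (wVol ω c r / volume (Cube c r)) *
        ((∫⁻ y in Cube c r, ENNReal.ofReal (ω y) ^ (-(1 / (q - 1)))) /
          volume (Cube c r)) ^ (q - 1) ≤ ENNReal.ofReal C

/-- A_∞ = ∪_{1 ≤ q < ∞} A_q. -/
def IsAinfty (ω : Rn n → ℝ) : Prop := IsA1 ω ∨ ∃ q > (1 : ℝ), IsAq q ω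

/-- The Fefferman–Stein sharp maximal function M^♯. -/
def sharpM (g : Rn n → ℝ) (x : Rn n) : ℝ≥0∞ :=
  ⨆ (c : Rn n) (r : ℝ) (_ : 0 < r) (_ : x ∈ Cube c r),
    (∫⁻ y in Cube c r, ENNReal.ofReal |g y - cubeAvg g c r|) / volume (Cube c r)

/-- M^♯_δ(g) = (M^♯(|g|^δ))^{1/δ}. -/
def sharpMd (δ : ℝ) (g : Rn n → ℝ) (x : Rn n) : ℝ≥0∞ :=
  sharpM (fun y => |g y| ^ δ) x ^ (1 / δ)

/-- The characteristic function of the cube Q = Cube c r. -/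
def chi (c : Rn n) (r : ℝ) : Rn n → ℝ := (Cube c r).indicator fun _ => 1

end

section Helpers

open MeasureTheory ENNReal NNReal

variable {n : ℕ}

lemma cube_meas (c : Rn n) (r : ℝ) : MeasurableSet (Cube c r) :=
  measurableSet_closedBall

lemma cube_vol_pos (c : Rn n) {r : ℝ} (hr : 0 < r) : 0 < volume (Cube c r) :=
  Metric.measure_closedBall_pos _ _ hr

lemma cube_vol_lt_top (c : Rn n) (r : ℝ) : volume (Cube c r) < ⊤ :=
  measure_closedBall_lt_top

lemma wVol_ne_top {ω : Rn n → ℝ} (hloc : LocallyIntegrable ω) (c : Rn n) (r : ℝ) :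
    wVol ω c r ≠ ⊤ :=
  (hloc.integrableOn_isCompact (isCompact_closedBall c r)).lintegral_lt_top.ne

lemma wVol_ne_zero {ω : Rn n → ℝ} (hmeas : Measurable ω)
    (hpos : ∀ᵐ x ∂(volume : Measure (Rn n)), 0 < ω x) (c : Rn n) {r : ℝ} (hr : 0 < r) :
    wVol ω c r ≠ 0 := by
  intro h0
  have h1 : (fun y => ENNReal.ofReal (ω y)) =ᵐ[volume.restrict (Cube c r)] 0 :=
    (lintegral_eq_zero_iff hmeas.ennreal_ofReal).mp h0
  have h2 : ∀ᵐ y ∂volume.restrict (Cube c r), (False : Prop) := by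
    filter_upwards [h1, ae_restrict_of_ae hpos] with y hy1 hy2
    exact absurd hy1 (ENNReal.ofReal_pos.mpr hy2).ne'
  have h3 : volume.restrict (Cube c r) = 0 :=
    ae_eq_bot.mp (Filter.eventually_false_iff_eq_bot.mp h2)
  have h4 : volume (Cube c r) = 0 := by
    rw [← Measure.restrict_apply_self, h3]; rfl
  exact (cube_vol_pos c hr).ne' h4

lemma wNorm_chi (ω : Rn n → ℝ) {q : ℝ} (hq : 0 < q) (c : Rn n) (r : ℝ) :
    wNorm q ω (chi c r) = (wVol ω c r) ^ (1 / q) := by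
  simp only [wNorm, wNormE, wVol]
  congr 1
  rw [← lintegral_indicator (cube_meas c r)]
  refine lintegral_congr fun x => ?_
  by_cases hx : x ∈ Cube c r
  · simp [chi, Set.indicator_of_mem hx]
  · simp [chi, Set.indicator_of_notMem hx, ENNReal.zero_rpow_of_pos hq]

/-- Pointwise lower bound for the maximal commutator on the cube. -/
lemma pointwise_bound (b : Rn n → ℝ) (hb : LocallyIntegrable b) (c : Rn n) {r : ℝ}
    (hr : 0 < r) {x : Rn n} (hx : x ∈ Cube c r) :
    (∫⁻ y in Cube c r, ENNReal.ofReal |b y - cubeAvg b c r|) / volume (Cube c r)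
      ≤ MSigma b (chi c r) (chi c r) x := by
  have hQ := cube_meas c r
  have hV0 : volume (Cube c r) ≠ 0 := (cube_vol_pos c hr).ne'
  have hVt : volume (Cube c r) ≠ ⊤ := (cube_vol_lt_top c r).ne
  set Vr : ℝ := (volume (Cube c r)).toReal with hVrdef
  have hVr : 0 < Vr := ENNReal.toReal_pos hV0 hVt
  have hconst : IntegrableOn (fun _ => b x) (Cube c r) volume :=
    integrableOn_const (cube_vol_lt_top c r).ne
  have hbi : IntegrableOn b (Cube c r) volume :=
    hb.integrableOn_isCompact (isCompact_closedBall c r)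
  have hIx_int : IntegrableOn (fun y => |b x - b y|) (Cube c r) volume := (hconst.sub hbi).abs
  have hIb : IntegrableOn (fun y => |b y - cubeAvg b c r|) (Cube c r) volume :=
    (hbi.sub (integrableOn_const (cube_vol_lt_top c r).ne)).abs
  have hconstabs : IntegrableOn (fun _ => |b x - cubeAvg b c r|) (Cube c r) volume :=
    integrableOn_const (cube_vol_lt_top c r).ne
  -- real estimates
  have havg : b x - cubeAvg b c r = (∫ y in Cube c r, (b x - b y)) / Vr := by
    rw [integral_sub hconst hbi, setIntegral_const, smul_eq_mul, measureReal_def]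
    simp only [cubeAvg]
    rw [← hVrdef]
    field_simp
  have habs : |b x - cubeAvg b c r| * Vr ≤ ∫ y in Cube c r, |b x - b y| := by
    rw [havg, abs_div, abs_of_pos hVr, div_mul_cancel₀ _ hVr.ne']
    simpa [Real.norm_eq_abs] using
      norm_integral_le_integral_norm (μ := volume.restrict (Cube c r)) (fun y => b x - b y)
  have hI2 : (∫ y in Cube c r, |b y - cubeAvg b c r|) ≤ 2 * ∫ y in Cube c r, |b x - b y| := by
    have hmono : (∫ y in Cube c r, |b y - cubeAvg b c r|)
        ≤ ∫ y in Cube c r, (|b x - b y| + |b x - cubeAvg b c r|) := by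
      refine integral_mono hIb (hIx_int.add hconstabs) fun y => ?_
      have h : b y - cubeAvg b c r = (b x - cubeAvg b c r) - (b x - b y) := by ring
      rw [h]
      calc |(b x - cubeAvg b c r) - (b x - b y)|
          ≤ |b x - cubeAvg b c r| + |b x - b y| := abs_sub _ _
        _ = |b x - b y| + |b x - cubeAvg b c r| := add_comm _ _
    have hadd : (∫ y in Cube c r, (|b x - b y| + |b x - cubeAvg b c r|))
        = (∫ y in Cube c r, |b x - b y|) + Vr * |b x - cubeAvg b c r| := by
      rw [integral_add hIx_int hconstabs, setIntegral_const, smul_eq_mul, measureReal_def, ← hVrdef]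
    have h3 : Vr * |b x - cubeAvg b c r| ≤ ∫ y in Cube c r, |b x - b y| := by
      rw [mul_comm]; exact habs
    calc (∫ y in Cube c r, |b y - cubeAvg b c r|)
        ≤ (∫ y in Cube c r, |b x - b y|) + Vr * |b x - cubeAvg b c r| := hmono.trans hadd.le
      _ ≤ (∫ y in Cube c r, |b x - b y|) + ∫ y in Cube c r, |b x - b y| := by linarith
      _ = 2 * ∫ y in Cube c r, |b x - b y| := by ring
  -- pass to lintegrals
  have hA : (∫⁻ y in Cube c r, ENNReal.ofReal |b y - cubeAvg b c r|)
      = ENNReal.ofReal (∫ y in Cube c r, |b y - cubeAvg b c r|) :=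
    (ofReal_integral_eq_lintegral_ofReal hIb (ae_of_all _ fun y => abs_nonneg _)).symm
  have hAx : (∫⁻ y in Cube c r, ENNReal.ofReal |b x - b y|)
      = ENNReal.ofReal (∫ y in Cube c r, |b x - b y|) :=
    (ofReal_integral_eq_lintegral_ofReal hIx_int (ae_of_all _ fun y => abs_nonneg _)).symm
  have hAAx : (∫⁻ y in Cube c r, ENNReal.ofReal |b y - cubeAvg b c r|)
      ≤ (∫⁻ y in Cube c r, ENNReal.ofReal |b x - b y|)
        + (∫⁻ y in Cube c r, ENNReal.ofReal |b x - b y|) := by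
    rw [hA, hAx, ← ENNReal.ofReal_add (integral_nonneg fun y => abs_nonneg _)
      (integral_nonneg fun y => abs_nonneg _)]
    exact ENNReal.ofReal_le_ofReal (by linarith)
  -- chi is 1 on the cube
  have hchi : ∀ y ∈ Cube c r, ENNReal.ofReal |chi c r y| = 1 := fun y hy => by
    simp [chi, Set.indicator_of_mem hy]
  -- the double integrals
  have hdouble1 : (∫⁻ y₁ in Cube c r, ∫⁻ y₂ in Cube c r,
      ENNReal.ofReal |b x - b y₁| *
        (ENNReal.ofReal |chi c r y₁| * ENNReal.ofReal |chi c r y₂|))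
      = (∫⁻ y in Cube c r, ENNReal.ofReal |b x - b y|) * volume (Cube c r) := by
    rw [setLIntegral_congr_fun_ae (g := fun y₁ => ENNReal.ofReal |b x - b y₁| * volume (Cube c r))
      hQ (ae_of_all _ fun y₁ hy₁ => ?_)]
    · exact lintegral_mul_const' _ _ hVt
    · rw [setLIntegral_congr_fun_ae (g := fun _ => ENNReal.ofReal |b x - b y₁|) hQ
        (ae_of_all _ fun y₂ hy₂ => by rw [hchi _ hy₁, hchi _ hy₂, mul_one, mul_one]),
        setLIntegral_const]
  have hdouble2 : (∫⁻ y₁ in Cube c r, ∫⁻ y₂ in Cube c r,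
      ENNReal.ofReal |b x - b y₂| *
        (ENNReal.ofReal |chi c r y₁| * ENNReal.ofReal |chi c r y₂|))
      = (∫⁻ y in Cube c r, ENNReal.ofReal |b x - b y|) * volume (Cube c r) := by
    rw [setLIntegral_congr_fun_ae
      (g := fun _ => ∫⁻ y in Cube c r, ENNReal.ofReal |b x - b y|)
      hQ (ae_of_all _ fun y₁ hy₁ =>
        setLIntegral_congr_fun_ae (g := fun y₂ => ENNReal.ofReal |b x - b y₂|) hQ
          (ae_of_all _ fun y₂ hy₂ => by rw [hchi _ hy₁, hchi _ hy₂, mul_one, mul_one])),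
      setLIntegral_const]
  have hMc1 : (∫⁻ y in Cube c r, ENNReal.ofReal |b x - b y|) / volume (Cube c r)
      ≤ Mc1 b (chi c r) (chi c r) x := by
    unfold Mc1
    refine le_iSup_of_le c (le_iSup_of_le r (le_iSup_of_le hr (le_iSup_of_le hx ?_)))
    rw [hdouble1, sq, ENNReal.mul_div_mul_right _ _ hV0 hVt]
  have hMc2 : (∫⁻ y in Cube c r, ENNReal.ofReal |b x - b y|) / volume (Cube c r)
      ≤ Mc2 b (chi c r) (chi c r) x := by
    unfold Mc2
    refine le_iSup_of_le c (le_iSup_of_le r (le_iSup_of_le hr (le_iSup_of_le hx ?_)))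
    rw [hdouble2, sq, ENNReal.mul_div_mul_right _ _ hV0 hVt]
  calc (∫⁻ y in Cube c r, ENNReal.ofReal |b y - cubeAvg b c r|) / volume (Cube c r)
      ≤ ((∫⁻ y in Cube c r, ENNReal.ofReal |b x - b y|)
          + (∫⁻ y in Cube c r, ENNReal.ofReal |b x - b y|)) / volume (Cube c r) :=
        ENNReal.div_le_div_right hAAx _
    _ = (∫⁻ y in Cube c r, ENNReal.ofReal |b x - b y|) / volume (Cube c r)
        + (∫⁻ y in Cube c r, ENNReal.ofReal |b x - b y|) / volume (Cube c r) :=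
        ENNReal.add_div
    _ ≤ Mc1 b (chi c r) (chi c r) x + Mc2 b (chi c r) (chi c r) x := add_le_add hMc1 hMc2
    _ = MSigma b (chi c r) (chi c r) x := rfl

end Helpers
/-- if 𝓜_{Σb⃗} is bounded L^{p₁}(ω) × L^{p₂}(ω) → L^p(ω^{1-p}) with
norm K, then b ∈ BMO(ω) with (1/ω(Q))∫_Q |b - b_Q| ≤ C·K for all cubes Q. -/
theorem stmt6 {n : ℕ} (p₁ p₂ p : ℝ) (hp₁ : 1 < p₁) (hp₂ : 1 < p₂)
    (hp : 1 / p = 1 / p₁ + 1 / p₂) (ω : Rn n → ℝ) (hω : IsA1 ω)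
    (b : Rn n → ℝ) (hb : LocallyIntegrable b) (K : ℝ≥0)
    (hK : ∀ f₁ f₂ : Rn n → ℝ,
      wNormE p (fun x => ω x ^ (1 - p)) (MSigma b f₁ f₂) ≤
        (K : ℝ≥0∞) * wNorm p₁ ω f₁ * wNorm p₂ ω f₂) :
    ∃ C : ℝ≥0, ∀ (c : Rn n) (r : ℝ), 0 < r →
      (∫⁻ y in Cube c r, ENNReal.ofReal |b y - cubeAvg b c r|) / wVol ω c r ≤
        (C : ℝ≥0∞) * K := by
  obtain ⟨hmeas, hnn, hpos, hloc, C₁, hC₁, hA1⟩ := hω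
  have hp₁0 : 0 < p₁ := lt_trans one_pos hp₁
  have hp₂0 : 0 < p₂ := lt_trans one_pos hp₂
  have hp0 : 0 < p := by
    have h : 0 < 1 / p := by
      rw [hp]; exact add_pos (one_div_pos.mpr hp₁0) (one_div_pos.mpr hp₂0)
    exact one_div_pos.mp h
  suffices h : ∃ D : ℝ≥0∞, D ≠ 0 ∧ D ≠ ⊤ ∧ ∀ (c : Rn n) (r : ℝ), 0 < r →
      volume (Cube c r) ^ p * wVol ω c r ^ (1 - p) ≤
        D * ∫⁻ y in Cube c r, ENNReal.ofReal (ω y ^ (1 - p)) by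
    obtain ⟨D, hD0, hDt, hDT⟩ := h
    refine ⟨(D ^ (1 / p)).toNNReal, fun c r hr => ?_⟩
    have hQ := cube_meas c r
    have hVpos : 0 < volume (Cube c r) := cube_vol_pos c hr
    have hV0 : volume (Cube c r) ≠ 0 := hVpos.ne'
    have hVt : volume (Cube c r) ≠ ⊤ := (cube_vol_lt_top c r).ne
    have hW0 : wVol ω c r ≠ 0 := wVol_ne_zero hmeas hpos c hr
    have hWt : wVol ω c r ≠ ⊤ := wVol_ne_top hloc c r
    set V := volume (Cube c r) with hVdef
    set W := wVol ω c r with hWdef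
    set T := ∫⁻ y in Cube c r, ENNReal.ofReal (ω y ^ (1 - p)) with hTdef
    set A := ∫⁻ y in Cube c r, ENNReal.ofReal |b y - cubeAvg b c r| with hAdef
    have hAt : A ≠ ⊤ := by
      have hbi : IntegrableOn b (Cube c r) volume :=
        hb.integrableOn_isCompact (isCompact_closedBall c r)
      have hconst : IntegrableOn (fun _ => cubeAvg b c r) (Cube c r) volume :=
        integrableOn_const (cube_vol_lt_top c r).ne
      have hlt : (∫⁻ y in Cube c r, ENNReal.ofReal |b y - cubeAvg b c r|) < ⊤ :=
        ((hbi.sub hconst).abs).lintegral_lt_top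
      exact hlt.ne
    -- Step 1: testing bound
    have hnorm := hK (chi c r) (chi c r)
    rw [wNorm_chi ω hp₁0 c r, wNorm_chi ω hp₂0 c r] at hnorm
    simp only [wNormE] at hnorm
    rw [← hWdef] at hnorm
    have hKW : (∫⁻ x, MSigma b (chi c r) (chi c r) x ^ p *
        ENNReal.ofReal (ω x ^ (1 - p))) ^ (1 / p) ≤ (K : ℝ≥0∞) * W ^ (1 / p) := by
      calc (∫⁻ x, MSigma b (chi c r) (chi c r) x ^ p *
          ENNReal.ofReal (ω x ^ (1 - p))) ^ (1 / p)
          ≤ (K : ℝ≥0∞) * W ^ (1 / p₁) * W ^ (1 / p₂) := hnorm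
        _ = (K : ℝ≥0∞) * W ^ (1 / p) := by
            rw [mul_assoc, ← ENNReal.rpow_add _ _ hW0 hWt, ← hp]
    have hS : (∫⁻ x, MSigma b (chi c r) (chi c r) x ^ p *
        ENNReal.ofReal (ω x ^ (1 - p))) ≤ (K : ℝ≥0∞) ^ p * W := by
      have h1 := ENNReal.rpow_le_rpow hKW hp0.le
      rw [← ENNReal.rpow_mul, one_div_mul_cancel hp0.ne', ENNReal.rpow_one,
        ENNReal.mul_rpow_of_nonneg _ _ hp0.le, ← ENNReal.rpow_mul,
        one_div_mul_cancel hp0.ne', ENNReal.rpow_one] at h1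
      exact h1
    -- Step 2: pointwise lower bound integrated over the cube
    have hAVt : (A / V) ^ p ≠ ⊤ :=
      ENNReal.rpow_ne_top_of_nonneg hp0.le (ENNReal.div_lt_top hAt hV0).ne
    have hlow : (A / V) ^ p * T ≤ ∫⁻ x, MSigma b (chi c r) (chi c r) x ^ p *
        ENNReal.ofReal (ω x ^ (1 - p)) := by
      calc (A / V) ^ p * T
          = ∫⁻ x in Cube c r, (A / V) ^ p * ENNReal.ofReal (ω x ^ (1 - p)) :=
            (lintegral_const_mul' _ _ hAVt).symm
        _ ≤ ∫⁻ x in Cube c r, MSigma b (chi c r) (chi c r) x ^ p *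
              ENNReal.ofReal (ω x ^ (1 - p)) := by
            refine lintegral_mono_ae ?_
            filter_upwards [ae_restrict_mem hQ] with x hx
            exact mul_le_mul_left
              (ENNReal.rpow_le_rpow (pointwise_bound b hb c hr hx) hp0.le) _
        _ ≤ _ := setLIntegral_le_lintegral _ _
    -- Step 3: combine
    have hVp0 : V ^ p ≠ 0 := (ENNReal.rpow_pos hVpos hVt).ne'
    have hVpt : V ^ p ≠ ⊤ := ENNReal.rpow_ne_top_of_nonneg hp0.le hVt
    have hAV : (A / V) ^ p * V ^ p = A ^ p := by
      rw [← ENNReal.mul_rpow_of_nonneg _ _ hp0.le, ENNReal.div_mul_cancel hV0 hVt]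
    have hc1 : A ^ p * W ^ (1 - p) * V ^ p ≤ D * (K : ℝ≥0∞) ^ p * W * V ^ p := by
      calc A ^ p * W ^ (1 - p) * V ^ p = A ^ p * (V ^ p * W ^ (1 - p)) := by ring
        _ ≤ A ^ p * (D * T) := mul_le_mul_right (hDT c r hr) _
        _ = (D * V ^ p) * ((A / V) ^ p * T) := by rw [← hAV]; ring
        _ ≤ (D * V ^ p) * ((K : ℝ≥0∞) ^ p * W) := mul_le_mul_right (hlow.trans hS) _
        _ = D * (K : ℝ≥0∞) ^ p * W * V ^ p := by ring
    have hc2 : A ^ p * W ^ (1 - p) ≤ D * (K : ℝ≥0∞) ^ p * W :=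
      (ENNReal.mul_le_mul_iff_left hVp0 hVpt).mp hc1
    have hc3 : A ^ p ≤ D * (K : ℝ≥0∞) ^ p * W ^ p := by
      have he : A ^ p = A ^ p * W ^ (1 - p) * W ^ (p - 1) := by
        rw [mul_assoc, ← ENNReal.rpow_add _ _ hW0 hWt,
          show (1 - p) + (p - 1) = 0 by ring, ENNReal.rpow_zero, mul_one]
      rw [he]
      calc A ^ p * W ^ (1 - p) * W ^ (p - 1)
          ≤ D * (K : ℝ≥0∞) ^ p * W * W ^ (p - 1) := mul_le_mul_left hc2 _
        _ = D * (K : ℝ≥0∞) ^ p * (W ^ (1 : ℝ) * W ^ (p - 1)) := by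
            rw [ENNReal.rpow_one]; ring
        _ = D * (K : ℝ≥0∞) ^ p * W ^ p := by
            rw [← ENNReal.rpow_add _ _ hW0 hWt, show (1 : ℝ) + (p - 1) = p by ring]
    have hfin : A ≤ D ^ (1 / p) * (K : ℝ≥0∞) * W := by
      rw [← ENNReal.rpow_le_rpow_iff hp0]
      calc A ^ p ≤ D * (K : ℝ≥0∞) ^ p * W ^ p := hc3
        _ = (D ^ (1 / p) * (K : ℝ≥0∞) * W) ^ p := by
            rw [ENNReal.mul_rpow_of_nonneg _ _ hp0.le,
              ENNReal.mul_rpow_of_nonneg _ _ hp0.le, ← ENNReal.rpow_mul,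
              one_div_mul_cancel hp0.ne', ENNReal.rpow_one]
    have hcoe : ((D ^ (1 / p)).toNNReal : ℝ≥0∞) = D ^ (1 / p) :=
      ENNReal.coe_toNNReal (ENNReal.rpow_ne_top_of_nonneg (one_div_pos.mpr hp0).le hDt)
    rw [hcoe, ENNReal.div_le_iff_le_mul (Or.inl hW0) (Or.inl hWt)]
    exact hfin
  -- Now produce D according to the size of p.
  rcases lt_or_ge p 1 with hplt | hpge
  · -- case p < 1 : use the A₁ condition
    have h1p : (0 : ℝ) ≤ 1 - p := by linarith
    refine ⟨ENNReal.ofReal C₁ ^ (1 - p), ?_, ?_, fun c r hr => ?_⟩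
    · exact (ENNReal.rpow_pos (ENNReal.ofReal_pos.mpr hC₁) ENNReal.ofReal_ne_top).ne'
    · exact ENNReal.rpow_ne_top_of_nonneg h1p ENNReal.ofReal_ne_top
    · have hVpos : 0 < volume (Cube c r) := cube_vol_pos c hr
      have hV0 : volume (Cube c r) ≠ 0 := hVpos.ne'
      have hVt : volume (Cube c r) ≠ ⊤ := (cube_vol_lt_top c r).ne
      have hess : wVol ω c r / volume (Cube c r) ≤ ENNReal.ofReal C₁ *
          essInf (fun y => ENNReal.ofReal (ω y)) (volume.restrict (Cube c r)) := hA1 c r hr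
      have hT : essInf (fun y => ENNReal.ofReal (ω y)) (volume.restrict (Cube c r)) ^ (1 - p)
          * volume (Cube c r)
          ≤ ∫⁻ y in Cube c r, ENNReal.ofReal (ω y ^ (1 - p)) := by
        rw [← setLIntegral_const]
        refine lintegral_mono_ae ?_
        filter_upwards [ae_restrict_of_ae hpos,
          ae_essInf_le (f := fun y => ENNReal.ofReal (ω y))
            (μ := volume.restrict (Cube c r))] with y hy hmy
        rw [← ENNReal.ofReal_rpow_of_pos hy]
        exact ENNReal.rpow_le_rpow hmy h1p
      have hfirst : (wVol ω c r / volume (Cube c r)) ^ (1 - p) * volume (Cube c r)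
          = volume (Cube c r) ^ p * wVol ω c r ^ (1 - p) := by
        calc (wVol ω c r / volume (Cube c r)) ^ (1 - p) * volume (Cube c r)
            = wVol ω c r ^ (1 - p) * (volume (Cube c r) ^ (-(1 - p))
                * volume (Cube c r) ^ (1 : ℝ)) := by
              rw [ENNReal.div_rpow_of_nonneg _ _ h1p, div_eq_mul_inv,
                ← ENNReal.rpow_neg, ENNReal.rpow_one, mul_assoc]
          _ = wVol ω c r ^ (1 - p) * volume (Cube c r) ^ p := by
              rw [← ENNReal.rpow_add _ _ hV0 hVt, show -(1 - p) + 1 = p by ring]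
          _ = volume (Cube c r) ^ p * wVol ω c r ^ (1 - p) := mul_comm _ _
      calc volume (Cube c r) ^ p * wVol ω c r ^ (1 - p)
          = (wVol ω c r / volume (Cube c r)) ^ (1 - p) * volume (Cube c r) := hfirst.symm
        _ ≤ (ENNReal.ofReal C₁ *
              essInf (fun y => ENNReal.ofReal (ω y)) (volume.restrict (Cube c r))) ^ (1 - p)
              * volume (Cube c r) :=
            mul_le_mul_left (ENNReal.rpow_le_rpow hess h1p) _
        _ = ENNReal.ofReal C₁ ^ (1 - p) *
              (essInf (fun y => ENNReal.ofReal (ω y)) (volume.restrict (Cube c r)) ^ (1 - p)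
                * volume (Cube c r)) := by
            rw [ENNReal.mul_rpow_of_nonneg _ _ h1p]; ring
        _ ≤ ENNReal.ofReal C₁ ^ (1 - p) *
              ∫⁻ y in Cube c r, ENNReal.ofReal (ω y ^ (1 - p)) := mul_le_mul_right hT _
  · rcases hpge.lt_or_eq with hpgt | hpeq
    · -- case 1 < p : Hölder's inequality
      have hp1ne : p - 1 ≠ 0 := sub_ne_zero.mpr (ne_of_gt hpgt)
      refine ⟨1, one_ne_zero, ENNReal.one_ne_top, fun c r hr => ?_⟩
      rw [one_mul]
      have hQ := cube_meas c r
      have hV0 : volume (Cube c r) ≠ 0 := (cube_vol_pos c hr).ne'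
      have hVt : volume (Cube c r) ≠ ⊤ := (cube_vol_lt_top c r).ne
      have hW0 : wVol ω c r ≠ 0 := wVol_ne_zero hmeas hpos c hr
      have hWt : wVol ω c r ≠ ⊤ := wVol_ne_top hloc c r
      have hpq : p.HolderConjugate (p / (p - 1)) :=
        (Real.holderConjugate_iff_eq_conjExponent hpgt).mpr rfl
      have hmf : AEMeasurable (fun xx : Rn n => ENNReal.ofReal (ω xx ^ ((1 - p) / p)))
          (volume.restrict (Cube c r)) :=
        ((hmeas.pow measurable_const).ennreal_ofReal).aemeasurable
      have hmg : AEMeasurable (fun xx : Rn n => ENNReal.ofReal (ω xx ^ ((p - 1) / p)))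
          (volume.restrict (Cube c r)) :=
        ((hmeas.pow measurable_const).ennreal_ofReal).aemeasurable
      have hfp : (∫⁻ xx in Cube c r, ENNReal.ofReal (ω xx ^ ((1 - p) / p)) ^ p) =
          ∫⁻ y in Cube c r, ENNReal.ofReal (ω y ^ (1 - p)) := by
        refine lintegral_congr_ae ?_
        filter_upwards [ae_restrict_of_ae hpos] with y hy
        rw [ENNReal.ofReal_rpow_of_pos (Real.rpow_pos_of_pos hy _),
          ← Real.rpow_mul (hnn y), div_mul_cancel₀ _ hp0.ne']
      have hgq : (∫⁻ xx in Cube c r, ENNReal.ofReal (ω xx ^ ((p - 1) / p)) ^ (p / (p - 1)))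
          = wVol ω c r := by
        refine lintegral_congr_ae ?_
        filter_upwards [ae_restrict_of_ae hpos] with y hy
        rw [ENNReal.ofReal_rpow_of_pos (Real.rpow_pos_of_pos hy _),
          ← Real.rpow_mul (hnn y),
          show (p - 1) / p * (p / (p - 1)) = 1 by field_simp, Real.rpow_one]
      have hVle : volume (Cube c r) ≤
          (∫⁻ y in Cube c r, ENNReal.ofReal (ω y ^ (1 - p))) ^ (1 / p)
            * wVol ω c r ^ (1 / (p / (p - 1))) := by
        have hone : volume (Cube c r) = ∫⁻ xx in Cube c r,
            ((fun xx : Rn n => ENNReal.ofReal (ω xx ^ ((1 - p) / p)))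
              * fun xx : Rn n => ENNReal.ofReal (ω xx ^ ((p - 1) / p))) xx := by
          rw [← setLIntegral_one]
          refine lintegral_congr_ae ?_
          filter_upwards [ae_restrict_of_ae hpos] with y hy
          simp only [Pi.mul_apply]
          rw [← ENNReal.ofReal_mul (Real.rpow_nonneg (hnn y) _),
            ← Real.rpow_add hy, show (1 - p) / p + (p - 1) / p = 0 by ring,
            Real.rpow_zero, ENNReal.ofReal_one]
        rw [hone, ← hfp, ← hgq]
        exact ENNReal.lintegral_mul_le_Lp_mul_Lq _ hpq hmf hmg
      have hVp : volume (Cube c r) ^ p ≤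
          (∫⁻ y in Cube c r, ENNReal.ofReal (ω y ^ (1 - p))) * wVol ω c r ^ (p - 1) := by
        have h1 := ENNReal.rpow_le_rpow hVle hp0.le
        rw [ENNReal.mul_rpow_of_nonneg _ _ hp0.le, ← ENNReal.rpow_mul,
          one_div_mul_cancel hp0.ne', ENNReal.rpow_one, ← ENNReal.rpow_mul,
          show 1 / (p / (p - 1)) * p = p - 1 by field_simp] at h1
        exact h1
      calc volume (Cube c r) ^ p * wVol ω c r ^ (1 - p)
          ≤ (∫⁻ y in Cube c r, ENNReal.ofReal (ω y ^ (1 - p))) * wVol ω c r ^ (p - 1)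
              * wVol ω c r ^ (1 - p) := mul_le_mul_left hVp _
        _ = (∫⁻ y in Cube c r, ENNReal.ofReal (ω y ^ (1 - p)))
              * (wVol ω c r ^ (p - 1) * wVol ω c r ^ (1 - p)) := mul_assoc _ _ _
        _ = ∫⁻ y in Cube c r, ENNReal.ofReal (ω y ^ (1 - p)) := by
            rw [← ENNReal.rpow_add _ _ hW0 hWt, show (p - 1) + (1 - p) = 0 by ring,
              ENNReal.rpow_zero, mul_one]
    · -- case p = 1
      refine ⟨1, one_ne_zero, ENNReal.one_ne_top, fun c r hr => ?_⟩
      rw [one_mul, ← hpeq]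
      simp only [sub_self, ENNReal.rpow_zero, ENNReal.rpow_one, mul_one, Real.rpow_zero,
        ENNReal.ofReal_one]
      rw [setLIntegral_one]
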